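/- Let R = UZᵀ with UᵀU = I and Z full rank, and let N satisfy UᵀN = 0, NZ = 0. The Weingarten map L_R(N), defined on the tangent space by L_R(N)(X) = U X_Uᵀ N + N X_Z (ZᵀZ)^{-1} Zᵀ where X = X_U Zᵀ + U X_Zᵀ with UᵀX_U = 0, is symmetric with respect to the Frobenius inner product: ⟨L_R(N)X, Y⟩ = ⟨X, L_R(N)Y⟩ for all tangent X, Y; explicitly ⟨X, L_R(N)Y⟩ = Tr((X_U Y_Zᵀ + Y_U X_Zᵀ)ᵀ N). -/
import Mathlib


open Matrix

lemma isUnit_gram {m r : ℕ} (Z : Matrix (Fin m) (Fin r) ℝ) (hZ : Z.rank = r) :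
    IsUnit (Zᵀ * Z) := by
  rw [← Matrix.mulVec_surjective_iff_isUnit]
  have hr : (Zᵀ * Z).rank = r := by rw [Matrix.rank_transpose_mul_self, hZ]
  have htop : LinearMap.range (Zᵀ * Z).mulVecLin = ⊤ := by
    apply Submodule.eq_top_of_finrank_eq
    simpa [Matrix.rank] using hr
  intro v
  obtain ⟨w, hw⟩ := htop ▸ Submodule.mem_top (x := v) (R := ℝ)
  exact ⟨w, hw⟩

/-- The Weingarten map `L_R(N) : X ↦ U X_Uᵀ N + N X_Z (ZᵀZ)⁻¹ Zᵀ` is symmetric for the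
Frobenius inner product on tangent vectors, with
`⟨X, L_R(N)Y⟩ = Tr((X_U Y_Zᵀ + Y_U X_Zᵀ)ᵀ N)`. -/
theorem weingarten_map_symmetric
    (l m r : ℕ) (U : Matrix (Fin l) (Fin r) ℝ) (Z : Matrix (Fin m) (Fin r) ℝ)
    (hU : Uᵀ * U = 1) (hZ : Z.rank = r)
    (N : Matrix (Fin l) (Fin m) ℝ) (hN1 : Uᵀ * N = 0) (hN2 : N * Z = 0)
    (XU YU : Matrix (Fin l) (Fin r) ℝ) (XZ YZ : Matrix (Fin m) (Fin r) ℝ)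
    (hXU : Uᵀ * XU = 0) (hYU : Uᵀ * YU = 0)
    (X Y : Matrix (Fin l) (Fin m) ℝ)
    (hX : X = XU * Zᵀ + U * XZᵀ) (hY : Y = YU * Zᵀ + U * YZᵀ) :
    let LX : Matrix (Fin l) (Fin m) ℝ := U * XUᵀ * N + N * XZ * (Zᵀ * Z)⁻¹ * Zᵀ
    let LY : Matrix (Fin l) (Fin m) ℝ := U * YUᵀ * N + N * YZ * (Zᵀ * Z)⁻¹ * Zᵀ
    Matrix.trace ((LX)ᵀ * Y) = Matrix.trace (Xᵀ * LY) ∧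
    Matrix.trace (Xᵀ * LY) = Matrix.trace ((XU * YZᵀ + YU * XZᵀ)ᵀ * N) := by
  intro LX LY
  have hG := isUnit_gram Z hZ
  have hinv : (Zᵀ * Z)⁻¹ * (Zᵀ * Z) = 1 :=
    Matrix.nonsing_inv_mul _ ((Matrix.isUnit_iff_isUnit_det _).mp hG)
  -- the key trace computation, for generic tangent pieces
  have key : ∀ (AU BU : Matrix (Fin l) (Fin r) ℝ) (AZ BZ : Matrix (Fin m) (Fin r) ℝ),
      Uᵀ * AU = 0 →
      Matrix.trace ((AU * Zᵀ + U * AZᵀ)ᵀ * (U * BUᵀ * N + N * BZ * (Zᵀ * Z)⁻¹ * Zᵀ))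
        = Matrix.trace ((AU * BZᵀ + BU * AZᵀ)ᵀ * N) := by
    intro AU BU AZ BZ hAU
    have hAU' : AUᵀ * U = 0 := by
      have := congrArg Matrix.transpose hAU; simpa using this
    have t1 : Matrix.trace ((AU * Zᵀ)ᵀ * (U * BUᵀ * N)) = 0 := by
      have e : (AU * Zᵀ)ᵀ * (U * BUᵀ * N) = Z * ((AUᵀ * U) * (BUᵀ * N)) := by
        rw [Matrix.transpose_mul, Matrix.transpose_transpose]; simp only [Matrix.mul_assoc]
      rw [e, hAU', Matrix.zero_mul, Matrix.mul_zero, Matrix.trace_zero]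
    have t2 : Matrix.trace ((AU * Zᵀ)ᵀ * (N * BZ * (Zᵀ * Z)⁻¹ * Zᵀ))
        = Matrix.trace ((AU * BZᵀ)ᵀ * N) := by
      have e : (AU * Zᵀ)ᵀ * (N * BZ * (Zᵀ * Z)⁻¹ * Zᵀ)
          = Z * (AUᵀ * N * BZ * (Zᵀ * Z)⁻¹ * Zᵀ) := by
        rw [Matrix.transpose_mul, Matrix.transpose_transpose]; simp only [Matrix.mul_assoc]
      rw [e, Matrix.trace_mul_comm]
      have e2 : AUᵀ * N * BZ * (Zᵀ * Z)⁻¹ * Zᵀ * Z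
          = AUᵀ * N * BZ * ((Zᵀ * Z)⁻¹ * (Zᵀ * Z)) := by simp only [Matrix.mul_assoc]
      rw [e2, hinv, Matrix.mul_one]
      have e3 : (AU * BZᵀ)ᵀ * N = BZ * (AUᵀ * N) := by
        rw [Matrix.transpose_mul, Matrix.transpose_transpose]; simp only [Matrix.mul_assoc]
      rw [e3, Matrix.trace_mul_comm, ← Matrix.mul_assoc]
    have t3 : Matrix.trace ((U * AZᵀ)ᵀ * (U * BUᵀ * N))
        = Matrix.trace ((BU * AZᵀ)ᵀ * N) := by
      have e : (U * AZᵀ)ᵀ * (U * BUᵀ * N) = AZ * ((Uᵀ * U) * (BUᵀ * N)) := by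
        rw [Matrix.transpose_mul, Matrix.transpose_transpose]; simp only [Matrix.mul_assoc]
      rw [e, hU, Matrix.one_mul]
      have e2 : (BU * AZᵀ)ᵀ * N = AZ * (BUᵀ * N) := by
        rw [Matrix.transpose_mul, Matrix.transpose_transpose]; simp only [Matrix.mul_assoc]
      rw [e2]
    have t4 : Matrix.trace ((U * AZᵀ)ᵀ * (N * BZ * (Zᵀ * Z)⁻¹ * Zᵀ)) = 0 := by
      have e : (U * AZᵀ)ᵀ * (N * BZ * (Zᵀ * Z)⁻¹ * Zᵀ)
          = AZ * ((Uᵀ * N) * (BZ * (Zᵀ * Z)⁻¹ * Zᵀ)) := by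
        rw [Matrix.transpose_mul, Matrix.transpose_transpose]; simp only [Matrix.mul_assoc]
      rw [e, hN1, Matrix.zero_mul, Matrix.mul_zero, Matrix.trace_zero]
    rw [Matrix.transpose_add, Matrix.add_mul, Matrix.mul_add, Matrix.mul_add,
      Matrix.trace_add, Matrix.trace_add, Matrix.trace_add, t1, t2, t3, t4,
      Matrix.transpose_add, Matrix.add_mul, Matrix.trace_add]
    ring
  have kXY := key XU YU XZ YZ hXU
  have kYX := key YU XU YZ XZ hYU
  rw [hX, hY] at *
  constructor
  · have h1 : Matrix.trace (LXᵀ * (YU * Zᵀ + U * YZᵀ))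
        = Matrix.trace ((YU * Zᵀ + U * YZᵀ)ᵀ * LX) := by
      rw [← Matrix.trace_transpose (LXᵀ * (YU * Zᵀ + U * YZᵀ)), Matrix.transpose_mul,
        Matrix.transpose_transpose]
    rw [h1, kYX, kXY]
    have : (YU * XZᵀ + XU * YZᵀ)ᵀ = (XU * YZᵀ + YU * XZᵀ)ᵀ := by rw [add_comm]
    rw [this]
  · exact kXY
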